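/- Let k be a field of characteristic p > 0, R = k[x_1,...,x_d], D a k-derivation of R with D^p = 0, and f ∈ R irreducible with f ∤ D(f). If x ∈ R is nonzero with D(x) = 0 and x = h·f^l with l > 0 and gcd(h, f) = 1, then p divides l and D(h) = 0; consequently x ∈ f^p · R^D. -/
import Mathlib


open MvPolynomial

/-- Let `D` be a `p`-nilpotent derivation of `R = k[x₁,…,x_d]` and `f` irreducible with
`f ∤ D f`.  If `x ≠ 0`, `D x = 0` and `x = h f^l` with `l > 0` and `f ∤ h`, then `p ∣ l`,
`D h = 0`, and consequently `x ∈ f^p · R^D`. -/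
theorem stmt5 (p : ℕ) [Fact p.Prime] (k : Type*) [Field k] [CharP k p]
    (d : ℕ) (D : Derivation k (MvPolynomial (Fin d) k) (MvPolynomial (Fin d) k))
    (hnil : (D.toLinearMap : Module.End k (MvPolynomial (Fin d) k)) ^ p = 0)
    (f : MvPolynomial (Fin d) k) (hf : Irreducible f) (hndvd : ¬ f ∣ D f)
    (x h : MvPolynomial (Fin d) k) (l : ℕ)
    (hx0 : x ≠ 0) (hDx : D x = 0) (hxe : x = h * f ^ l) (hl : 0 < l)
    (hcop : ¬ f ∣ h) :
    p ∣ l ∧ D h = 0 ∧ ∃ y : MvPolynomial (Fin d) k, D y = 0 ∧ x = f ^ p * y := by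
  have hprime : Prime f := hf.prime
  have hf0 : f ≠ 0 := hf.ne_zero
  obtain ⟨n, rfl⟩ : ∃ n, l = n + 1 := ⟨l - 1, (Nat.succ_pred_eq_of_pos hl).symm⟩
  have e1 : h * ((((n + 1 : ℕ) : MvPolynomial (Fin d) k)) * (f ^ n * D f))
      + f ^ (n + 1) * D h = 0 := by
    have := D.leibniz h (f ^ (n + 1))
    rw [← hxe, hDx] at this
    rw [Derivation.leibniz_pow] at this
    simp only [smul_eq_mul, nsmul_eq_mul, Nat.add_sub_cancel] at this
    linear_combination -this
  have e2 : f ^ n * (((n + 1 : ℕ) : MvPolynomial (Fin d) k) * h * D f + f * D h) = 0 := by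
    linear_combination e1
  have e3 : ((n + 1 : ℕ) : MvPolynomial (Fin d) k) * h * D f + f * D h = 0 := by
    rcases mul_eq_zero.mp e2 with h1 | h1
    · exact absurd h1 (pow_ne_zero n hf0)
    · exact h1
  have hcast : ((n + 1 : ℕ) : MvPolynomial (Fin d) k) = 0 := by
    by_contra hc
    have hdvd : f ∣ ((n + 1 : ℕ) : MvPolynomial (Fin d) k) * h * D f :=
      ⟨-D h, by linear_combination e3⟩
    rcases (hprime.dvd_mul.mp hdvd) with h1 | h1
    · rcases hprime.dvd_mul.mp h1 with h2 | h2
      · have : ((n + 1 : ℕ) : MvPolynomial (Fin d) k) = C ((n + 1 : ℕ) : k) := by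
          simp [map_natCast]
        have hk : ((n + 1 : ℕ) : k) ≠ 0 := fun hz => hc (by rw [this, hz, map_zero])
        have hu : IsUnit ((n + 1 : ℕ) : MvPolynomial (Fin d) k) := by
          rw [this]; exact (isUnit_iff_ne_zero.mpr hk).map C
        exact hf.not_isUnit (isUnit_of_dvd_unit h2 hu)
      · exact hcop h2
    · exact hndvd h1
  have hkcast : ((n + 1 : ℕ) : k) = 0 := by
    have hC : (C ((n + 1 : ℕ) : k) : MvPolynomial (Fin d) k) = 0 := by
      rw [map_natCast (C : k →+* MvPolynomial (Fin d) k)]; exact hcast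
    exact C_eq_zero.mp hC
  have hpl : p ∣ n + 1 := (CharP.cast_eq_zero_iff k p _).mp hkcast
  have hDh : D h = 0 := by
    rw [hcast] at e3
    simp only [zero_mul, zero_add] at e3
    rcases mul_eq_zero.mp e3 with h1 | h1
    · exact absurd h1 hf0
    · exact h1
  refine ⟨hpl, hDh, h * f ^ (n + 1 - p), ?_, ?_⟩
  · have hsub : p ∣ n + 1 - p := Nat.dvd_sub hpl dvd_rfl
    have hcast2 : ((n + 1 - p : ℕ) : MvPolynomial (Fin d) k) = 0 := by
      rw [← map_natCast (C : k →+* MvPolynomial (Fin d) k)]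
      rw [(CharP.cast_eq_zero_iff k p _).mpr hsub, map_zero]
    rw [D.leibniz, Derivation.leibniz_pow]
    simp only [smul_eq_mul, nsmul_eq_mul, hDh, hcast2, mul_zero, zero_mul, add_zero]
  · have hple : p ≤ n + 1 := Nat.le_of_dvd hl hpl
    rw [hxe, show f ^ p * (h * f ^ (n + 1 - p)) = h * (f ^ p * f ^ (n + 1 - p)) by ring,
      ← pow_add, Nat.add_sub_cancel' hple]
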